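/- Let n be odd and let C, C' be two distinct cuts of an n-piece pizza. Then C and C' divide the cyclic sequence of pieces into one interval with an odd number of pieces and one with an even number of pieces; moreover the almost alternating colorings induced by C and C' agree (R(C) = R(C')) on the odd interval and are opposite (R(C) = G(C')) on the even interval. -/
import Mathlib


/-- Piece `i` is red in the almost alternating coloring induced by the cut `C`
(the two pieces adjacent to `C` are red and the colors alternate elsewhere). -/
def red (n : ℕ) (C i : ZMod n) : Prop := Even ((i - C).val)

/-- The cyclic interval of pieces from `C` (included) up to `C'` (excluded). -/
def cyclicInterval (n : ℕ) (C C' : ZMod n) : Finset (ZMod n) :=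
  (Finset.range ((C' - C).val)).image fun k : ℕ => C + (k : ZMod n)

lemma sum_vals {n : ℕ} [NeZero n] {C C' : ZMod n} (hne : C ≠ C') :
    (C' - C).val + (C - C').val = n := by
  have h1 : C' - C ≠ 0 := sub_ne_zero.mpr (Ne.symm hne)
  have h2 : C - C' = -(C' - C) := by ring
  rw [h2, ZMod.neg_val, if_neg h1]
  have := ZMod.val_lt (C' - C)
  have : (C' - C).val ≠ 0 := by
    simpa [ZMod.val_eq_zero] using h1
  omega

lemma mem_vals {n : ℕ} [NeZero n] {C C' i : ZMod n} (hne : C ≠ C')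
    (h : i ∈ cyclicInterval n C C') :
    (i - C).val < (C' - C).val ∧ (i - C').val = (i - C).val + (C - C').val := by
  obtain ⟨k, hk, rfl⟩ := Finset.mem_image.mp h
  rw [Finset.mem_range] at hk
  have hsum := sum_vals (n := n) hne
  have hkn : k < n := by omega
  have hvk : ((k : ZMod n)).val = k := ZMod.val_cast_of_lt hkn
  have e1 : C + (k : ZMod n) - C = (k : ZMod n) := by ring
  have e2 : C + (k : ZMod n) - C' = (C - C') + (k : ZMod n) := by ring
  rw [e1, e2, hvk]
  have : (C - C').val + ((k : ZMod n)).val < n := by rw [hvk]; omega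
  rw [ZMod.val_add_of_lt this, hvk]
  exact ⟨hk, by omega⟩

/-- Two distinct cuts of an odd pizza divide it into one odd interval and one
even interval; the induced almost alternating colorings agree on the odd
interval and are opposite on the even interval. -/
theorem stmt6 (n : ℕ) (hn : Odd n) (C C' : ZMod n) (hne : C ≠ C') :
    (C' - C).val + (C - C').val = n ∧
    (Odd ((C' - C).val) ↔ Even ((C - C').val)) ∧
    (Odd ((C' - C).val) →
      (∀ i ∈ cyclicInterval n C C', (red n C i ↔ red n C' i)) ∧
      (∀ i ∈ cyclicInterval n C' C, (red n C i ↔ ¬ red n C' i))) ∧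
    (Odd ((C - C').val) →
      (∀ i ∈ cyclicInterval n C' C, (red n C i ↔ red n C' i)) ∧
      (∀ i ∈ cyclicInterval n C C', (red n C i ↔ ¬ red n C' i))) := by
  haveI : NeZero n := ⟨by rintro rfl; simp at hn⟩
  have hsum := sum_vals (n := n) hne
  obtain ⟨m, hm⟩ := hn
  refine ⟨hsum, ?_, ?_, ?_⟩
  · rw [Nat.odd_iff, Nat.even_iff]; omega
  · intro hodd
    rw [Nat.odd_iff] at hodd
    constructor
    · intro i hi
      obtain ⟨_, h2⟩ := mem_vals hne hi
      simp only [red, Nat.even_iff, h2]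
      omega
    · intro i hi
      obtain ⟨_, h2⟩ := mem_vals hne.symm hi
      simp only [red, Nat.even_iff, Nat.not_even_iff, h2]
      omega
  · intro hodd
    rw [Nat.odd_iff] at hodd
    constructor
    · intro i hi
      obtain ⟨_, h2⟩ := mem_vals hne.symm hi
      simp only [red, Nat.even_iff, h2]
      omega
    · intro i hi
      obtain ⟨_, h2⟩ := mem_vals hne hi
      simp only [red, Nat.even_iff, Nat.not_even_iff, h2]
      omega
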